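/- arXiv:1707.05475 — 2 statements merged into one kernel-verified Lean document; each statement's English description precedes it below -/
import Mathlib

section
/- If the set {A_{i,j} : i,j ∈ H} is irreducible and aperiodic, then the set Γ̄ = {(s1,s2) ∈ ℝ² : spr(C(e^{s1}, e^{s2})) ≤ 1} is a bounded subset of ℝ². -/
namespace QBD

/-- The index set `H = {-1, 0, 1}`. -/
def Hs : Finset ℤ := {-1, 0, 1}

/-- A nonnegative matrix with unit row sums. -/
def IsStochastic {n : ℕ} (M : Matrix (Fin n) (Fin n) ℝ) : Prop :=
  (∀ i j, 0 ≤ M i j) ∧ ∀ i, ∑ j, M i j = 1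

/-- `μ` is an eigenvalue of the complex matrix `M`. -/
def IsEigC {n : ℕ} (M : Matrix (Fin n) (Fin n) ℂ) (μ : ℂ) : Prop :=
  ∃ v : Fin n → ℂ, v ≠ 0 ∧ M.mulVec v = μ • v

/-- Spectral radius of a complex matrix. -/
noncomputable def spr {n : ℕ} (M : Matrix (Fin n) (Fin n) ℂ) : ℝ :=
  sSup {r : ℝ | ∃ μ : ℂ, IsEigC M μ ∧ r = ‖μ‖}

/-- Spectral radius of a real matrix. -/
noncomputable def sprR {n : ℕ} (M : Matrix (Fin n) (Fin n) ℝ) : ℝ :=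
  spr (M.map Complex.ofReal)

open Classical in
/-- `n`-step transition probabilities of a Markov kernel on a countable state space. -/
noncomputable def stepN {S : Type*} (P : S → S → ℝ) : ℕ → S → S → ℝ
  | 0, s, t => if s = t then 1 else 0
  | n + 1, s, t => ∑' u, stepN P n s u * P u t

/-- Irreducibility of a Markov kernel. -/
def ChainIrreducible {S : Type*} (P : S → S → ℝ) : Prop :=
  ∀ s t : S, ∃ n : ℕ, 1 ≤ n ∧ 0 < stepN P n s t

/-- Aperiodicity of a Markov kernel: for every state, the gcd of return times is one. -/
def ChainAperiodic {S : Type*} (P : S → S → ℝ) : Prop :=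
  ∀ s : S, ∀ d : ℕ, (∀ n : ℕ, 1 ≤ n → 0 < stepN P n s s → d ∣ n) → d = 1

/-- Kernel of the chain on `ℤ² × S0` governed everywhere by `{A_{k,l}}`. -/
def fullKernel (s0 : ℕ) (A : ℤ → ℤ → Matrix (Fin s0) (Fin s0) ℝ) :
    (ℤ × ℤ × Fin s0) → (ℤ × ℤ × Fin s0) → ℝ := fun x y =>
  A (y.1 - x.1) (y.2.1 - x.2.1) x.2.2 y.2.2

/-- `C(z,w) = Σ_{i,j∈H} A_{i,j} z^i w^j` (real arguments). -/
noncomputable def CmatR (s0 : ℕ) (A : ℤ → ℤ → Matrix (Fin s0) (Fin s0) ℝ) (z w : ℝ) :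
    Matrix (Fin s0) (Fin s0) ℝ :=
  ∑ i ∈ Hs, ∑ j ∈ Hs, (z ^ i * w ^ j) • A i j

/-- `C(z,w) = Σ_{i,j∈H} A_{i,j} z^i w^j` (complex arguments). -/
noncomputable def CmatC (s0 : ℕ) (A : ℤ → ℤ → Matrix (Fin s0) (Fin s0) ℝ) (z w : ℂ) :
    Matrix (Fin s0) (Fin s0) ℂ :=
  ∑ i ∈ Hs, ∑ j ∈ Hs, (z ^ i * w ^ j) • (A i j).map Complex.ofReal

/-- `χ(z,w) = spr(C(z,w))`. -/
noncomputable def chi (s0 : ℕ) (A : ℤ → ℤ → Matrix (Fin s0) (Fin s0) ℝ) (z w : ℝ) : ℝ :=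
  sprR (CmatR s0 A z w)

/-- `Γ̄ = {(s1,s2) : χ(e^{s1}, e^{s2}) ≤ 1}`. -/
def GammaBar (s0 : ℕ) (A : ℤ → ℤ → Matrix (Fin s0) (Fin s0) ℝ) : Set (ℝ × ℝ) :=
  {p | chi s0 A (Real.exp p.1) (Real.exp p.2) ≤ 1}

end QBD


namespace QBD

/-! ### Spectral lemmas -/

lemma eig_abs_le {n : ℕ} (M : Matrix (Fin n) (Fin n) ℂ) {μ : ℂ} (h : IsEigC M μ) :
    ‖μ‖ ≤ ∑ i, ∑ j, ‖M i j‖ := by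
  obtain ⟨v, hv, hMv⟩ := h
  have hne : ∃ i, v i ≠ 0 := by
    by_contra hc; push_neg at hc; exact hv (funext hc)
  obtain ⟨i1, hi1⟩ := hne
  haveI : Nonempty (Fin n) := ⟨i1⟩
  obtain ⟨i0, -, hi0⟩ := Finset.exists_max_image Finset.univ (fun i => ‖v i‖)
    ⟨i1, Finset.mem_univ _⟩
  have hv0 : 0 < ‖v i0‖ :=
    lt_of_lt_of_le (norm_pos_iff.mpr hi1) (hi0 i1 (Finset.mem_univ _))
  have key : ‖μ‖ * ‖v i0‖
      ≤ (∑ j, ‖M i0 j‖) * ‖v i0‖ := by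
    have h1 : ‖μ‖ * ‖v i0‖ = ‖(M.mulVec v) i0‖ := by
      rw [hMv]; simp [map_mul]
    rw [h1]
    calc ‖(M.mulVec v) i0‖
        = ‖∑ j, M i0 j * v j‖ := by simp [Matrix.mulVec, dotProduct]
      _ ≤ ∑ j, ‖M i0 j * v j‖ := by
          simpa using norm_sum_le Finset.univ (fun j => M i0 j * v j)
      _ ≤ ∑ j, ‖M i0 j‖ * ‖v i0‖ := by
          refine Finset.sum_le_sum fun j _ => ?_
          rw [norm_mul]
          exact mul_le_mul_of_nonneg_left (hi0 j (Finset.mem_univ _)) (norm_nonneg _)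
      _ = (∑ j, ‖M i0 j‖) * ‖v i0‖ := by rw [Finset.sum_mul]
  have h2 : ‖μ‖ ≤ ∑ j, ‖M i0 j‖ := le_of_mul_le_mul_right key hv0
  refine h2.trans ?_
  exact Finset.single_le_sum (f := fun i => ∑ j, ‖M i j‖)
    (fun i _ => Finset.sum_nonneg fun j _ => norm_nonneg _) (Finset.mem_univ i0)

lemma sprSet_bddAbove {n : ℕ} (M : Matrix (Fin n) (Fin n) ℂ) :
    BddAbove {r : ℝ | ∃ μ : ℂ, IsEigC M μ ∧ r = ‖μ‖} := by
  refine ⟨∑ i, ∑ j, ‖M i j‖, ?_⟩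
  rintro r ⟨μ, hμ, rfl⟩
  exact eig_abs_le M hμ

lemma abs_le_spr {n : ℕ} (M : Matrix (Fin n) (Fin n) ℂ) {μ : ℂ} (h : IsEigC M μ) :
    ‖μ‖ ≤ spr M :=
  le_csSup (sprSet_bddAbove M) ⟨μ, h, rfl⟩

lemma isEigC_iff_det {n : ℕ} (M : Matrix (Fin n) (Fin n) ℂ) (μ : ℂ) :
    IsEigC M μ ↔ (Matrix.scalar (Fin n) μ - M).det = 0 := by
  rw [← Matrix.exists_mulVec_eq_zero_iff]
  constructor
  · rintro ⟨v, hv, hMv⟩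
    refine ⟨v, hv, ?_⟩
    rw [Matrix.sub_mulVec, sub_eq_zero, hMv]
    ext x; simp [Matrix.scalar, Matrix.mulVec_diagonal]
  · rintro ⟨v, hv, hMv⟩
    refine ⟨v, hv, ?_⟩
    rw [Matrix.sub_mulVec, sub_eq_zero] at hMv
    rw [← hMv]
    ext x; simp [Matrix.scalar, Matrix.mulVec_diagonal]

lemma charpoly_eval {n : ℕ} (M : Matrix (Fin n) (Fin n) ℂ) (μ : ℂ) :
    M.charpoly.eval μ = (Matrix.scalar (Fin n) μ - M).det := by
  rw [Matrix.charpoly, eval_det, Matrix.matPolyEquiv_charmatrix]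
  simp

lemma isEigC_iff_root {n : ℕ} (M : Matrix (Fin n) (Fin n) ℂ) (μ : ℂ) :
    IsEigC M μ ↔ M.charpoly.IsRoot μ := by
  rw [isEigC_iff_det, Polynomial.IsRoot, charpoly_eval]

lemma exists_eig {n : ℕ} (hn : 0 < n) (M : Matrix (Fin n) (Fin n) ℂ) : ∃ μ, IsEigC M μ := by
  haveI : Nonempty (Fin n) := ⟨⟨0, hn⟩⟩
  have hdeg : M.charpoly.degree ≠ 0 := by
    rw [Polynomial.degree_eq_natDegree (Matrix.charpoly_monic M).ne_zero,
      Matrix.charpoly_natDegree_eq_dim]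
    simp only [Fintype.card_fin]
    exact_mod_cast hn.ne'
  obtain ⟨μ, hμ⟩ := IsAlgClosed.exists_root M.charpoly hdeg
  exact ⟨μ, (isEigC_iff_root M μ).mpr hμ⟩

lemma mem_spectrum_iff {n : ℕ} (M : Matrix (Fin n) (Fin n) ℂ) (μ : ℂ) :
    μ ∈ spectrum ℂ M ↔ IsEigC M μ := by
  rw [spectrum.mem_iff, isEigC_iff_det]
  rw [Matrix.isUnit_iff_isUnit_det, isUnit_iff_ne_zero, not_ne_iff]
  rfl

lemma spr_nonneg {n : ℕ} (hn : 0 < n) (M : Matrix (Fin n) (Fin n) ℂ) : 0 ≤ spr M := by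
  obtain ⟨μ, hμ⟩ := exists_eig hn M
  exact (norm_nonneg μ).trans (abs_le_spr M hμ)

lemma trace_abs_le {n m : ℕ} (hn : 0 < n) (hm : 0 < m) (M : Matrix (Fin n) (Fin n) ℂ) :
    ‖(M ^ m).trace‖ ≤ n * spr M ^ m := by
  haveI : Nonempty (Fin n) := ⟨⟨0, hn⟩⟩
  set N := M ^ m with hN
  have htr : N.trace = N.charpoly.roots.sum := Matrix.trace_eq_sum_roots_charpoly N
  have hcard : N.charpoly.roots.card = n := by
    have h1 := Polynomial.splits_iff_card_roots.mp (IsAlgClosed.splits N.charpoly)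
    rwa [Matrix.charpoly_natDegree_eq_dim, Fintype.card_fin] at h1
  have hbound : ∀ r ∈ N.charpoly.roots.map norm, r ≤ spr M ^ m := by
    intro r hr
    obtain ⟨ν, hν, rfl⟩ := Multiset.mem_map.mp hr
    have hEig : IsEigC N ν := (isEigC_iff_root N ν).mpr (Polynomial.isRoot_of_mem_roots hν)
    have hmem : ν ∈ spectrum ℂ N := (mem_spectrum_iff N ν).mpr hEig
    rw [hN, spectrum.map_pow_of_pos M hm] at hmem
    obtain ⟨μ, hμ, rfl⟩ := hmem
    have hμ' : IsEigC M μ := (mem_spectrum_iff M μ).mp hμ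
    calc ‖μ ^ m‖ = ‖μ‖ ^ m := norm_pow _ _
      _ ≤ spr M ^ m := pow_le_pow_left₀ (norm_nonneg _) (abs_le_spr M hμ') m
  calc ‖N.trace‖ = ‖N.charpoly.roots.sum‖ := by rw [htr]
    _ ≤ (N.charpoly.roots.map norm).sum := norm_multiset_sum_le _
    _ = (N.charpoly.roots.map norm).sum := by
        congr 1
    _ ≤ (N.charpoly.roots.map norm).card • (spr M ^ m) :=
        Multiset.sum_le_card_nsmul _ _ hbound
    _ = n * spr M ^ m := by rw [Multiset.card_map, hcard, nsmul_eq_mul]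

lemma trace_abs_le_real {n m : ℕ} (hn : 0 < n) (hm : 0 < m) (M : Matrix (Fin n) (Fin n) ℝ) :
    |((M ^ m).trace)| ≤ n * sprR M ^ m := by
  have h := trace_abs_le hn hm (M.map Complex.ofReal)
  have hpow : (M.map Complex.ofReal) ^ m = (M ^ m).map Complex.ofReal := by
    have h2 := map_pow (Complex.ofRealHom.mapMatrix) M m
    simp only [RingHom.mapMatrix_apply] at h2; exact h2.symm
  have htrace : ((M ^ m).map Complex.ofReal).trace = ((M ^ m).trace : ℂ) := by
    simp [Matrix.trace, Matrix.map_apply, Matrix.diag]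
  rw [hpow, htrace, Complex.norm_real, Real.norm_eq_abs] at h
  exact h

/-! ### Chain lemmas -/

variable {s0 : ℕ} {A : ℤ → ℤ → Matrix (Fin s0) (Fin s0) ℝ}

lemma CmatR_apply (z w : ℝ) (k l : Fin s0) :
    CmatR s0 A z w k l = ∑ i ∈ Hs, ∑ j ∈ Hs, z ^ i * w ^ j * A i j k l := by
  simp [CmatR, Matrix.sum_apply]

lemma CmatR_nonneg (hAnn : ∀ i j : ℤ, ∀ k l, 0 ≤ A i j k l) {z w : ℝ}
    (hz : 0 < z) (hw : 0 < w) (k l : Fin s0) : 0 ≤ CmatR s0 A z w k l := by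
  rw [CmatR_apply]
  refine Finset.sum_nonneg fun i _ => Finset.sum_nonneg fun j _ => ?_
  exact mul_nonneg (mul_nonneg (zpow_pos hz i).le (zpow_pos hw j).le) (hAnn i j k l)

lemma CmatR_pow_nonneg (hAnn : ∀ i j : ℤ, ∀ k l, 0 ≤ A i j k l) {z w : ℝ}
    (hz : 0 < z) (hw : 0 < w) (n : ℕ) (k l : Fin s0) : 0 ≤ ((CmatR s0 A z w) ^ n) k l := by
  induction n generalizing k l with
  | zero => simp [Matrix.one_apply]; split <;> norm_num
  | succ n IH =>
    rw [pow_succ, Matrix.mul_apply]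
    exact Finset.sum_nonneg fun j _ => mul_nonneg (IH k j) (CmatR_nonneg hAnn hz hw j l)

lemma key_ineq (hAsupp : ∀ i j : ℤ, ¬(i ∈ Hs ∧ j ∈ Hs) → A i j = 0)
    (hAnn : ∀ i j : ℤ, ∀ k l, 0 ≤ A i j k l) {z w : ℝ} (hz : 0 < z) (hw : 0 < w) :
    ∀ (n : ℕ) (x y : ℤ × ℤ × Fin s0),
      z ^ (y.1 - x.1) * w ^ (y.2.1 - x.2.1) * stepN (fullKernel s0 A) n x y
        ≤ ((CmatR s0 A z w) ^ n) x.2.2 y.2.2 := by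
  intro n
  induction n with
  | zero =>
    intro x y
    simp only [stepN, pow_zero]
    by_cases h : x = y
    · subst h; simp [Matrix.one_apply_eq]
    · rw [if_neg h, mul_zero]
      rw [Matrix.one_apply]
      split <;> norm_num
  | succ n IH =>
    intro x y
    classical
    set P := fullKernel s0 A with hP
    set F : Finset (ℤ × ℤ × Fin s0) :=
      Finset.image (fun p : ℤ × ℤ × Fin s0 => (y.1 - p.1, y.2.1 - p.2.1, p.2.2))
        (Hs ×ˢ Hs ×ˢ Finset.univ) with hF
    have hsupport : ∀ u ∉ F, stepN P n x u * P u y = 0 := by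
      intro u hu
      have hker : P u y = 0 := by
        by_contra hne
        have hmem : (y.1 - u.1) ∈ Hs ∧ (y.2.1 - u.2.1) ∈ Hs := by
          by_contra hc
          exact hne (by simp [hP, fullKernel, hAsupp _ _ hc])
        apply hu
        rw [hF]
        refine Finset.mem_image.mpr ⟨(y.1 - u.1, y.2.1 - u.2.1, u.2.2), ?_, ?_⟩
        · exact Finset.mem_product.mpr ⟨hmem.1,
            Finset.mem_product.mpr ⟨hmem.2, Finset.mem_univ _⟩⟩
        · simp
      rw [hker, mul_zero]
    have hstep : stepN P (n+1) x y = ∑ u ∈ F, stepN P n x u * P u y := by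
      simp only [stepN]
      exact tsum_eq_sum hsupport
    have hinj : ∀ p ∈ Hs ×ˢ Hs ×ˢ (Finset.univ : Finset (Fin s0)),
        ∀ q ∈ Hs ×ˢ Hs ×ˢ (Finset.univ : Finset (Fin s0)),
        (y.1 - p.1, y.2.1 - p.2.1, p.2.2) = (y.1 - q.1, y.2.1 - q.2.1, q.2.2) → p = q := by
      rintro ⟨a, b, c⟩ - ⟨d, e, f⟩ - h
      simp only [Prod.mk.injEq] at h ⊢
      exact ⟨by omega, by omega, h.2.2⟩
    rw [hstep, Finset.mul_sum, hF, Finset.sum_image hinj]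
    have hterm : ∀ p ∈ Hs ×ˢ Hs ×ˢ (Finset.univ : Finset (Fin s0)),
        z ^ (y.1 - x.1) * w ^ (y.2.1 - x.2.1) *
          (stepN P n x (y.1 - p.1, y.2.1 - p.2.1, p.2.2) *
            P (y.1 - p.1, y.2.1 - p.2.1, p.2.2) y)
        ≤ ((CmatR s0 A z w) ^ n) x.2.2 p.2.2 *
            (z ^ p.1 * w ^ p.2.1 * A p.1 p.2.1 p.2.2 y.2.2) := by
      rintro ⟨i, j, k⟩ -
      have hPval : P (y.1 - i, y.2.1 - j, k) y = A i j k y.2.2 := by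
        simp [hP, fullKernel]
      rw [hPval]
      have halg : z ^ (y.1 - x.1) * w ^ (y.2.1 - x.2.1) *
          (stepN P n x (y.1 - i, y.2.1 - j, k) * A i j k y.2.2)
          = (z ^ (y.1 - i - x.1) * w ^ (y.2.1 - j - x.2.1) *
              stepN P n x (y.1 - i, y.2.1 - j, k)) *
            (z ^ i * w ^ j * A i j k y.2.2) := by
        rw [show y.1 - x.1 = (y.1 - i - x.1) + i by ring,
          show y.2.1 - x.2.1 = (y.2.1 - j - x.2.1) + j by ring,
          zpow_add₀ hz.ne', zpow_add₀ hw.ne']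
        ring
      rw [halg]
      refine mul_le_mul_of_nonneg_right ?_ ?_
      · exact IH x (y.1 - i, y.2.1 - j, k)
      · exact mul_nonneg (mul_nonneg (zpow_pos hz i).le (zpow_pos hw j).le) (hAnn i j k y.2.2)
    refine le_trans (Finset.sum_le_sum hterm) (le_of_eq ?_)
    rw [pow_succ, Matrix.mul_apply]
    simp only [Finset.sum_product, CmatR_apply, Finset.mul_sum]
    exact (Finset.sum_congr rfl fun i _ => Finset.sum_comm).trans Finset.sum_comm

lemma stepN_nonneg {S : Type*} (P : S → S → ℝ) (hP : ∀ x y, 0 ≤ P x y) :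
    ∀ (n : ℕ) (x y : S), 0 ≤ stepN P n x y := by
  intro n
  induction n with
  | zero => intro x y; simp only [stepN]; split <;> norm_num
  | succ n IH =>
    intro x y
    simp only [stepN]
    exact tsum_nonneg fun u => mul_nonneg (IH x u) (hP u y)

end QBD

open QBD in
/-- if `{A_{i,j}}` is irreducible and aperiodic, then `Γ̄` is bounded. -/
theorem statement3
    (s0 : ℕ) (hs0 : 1 ≤ s0)
    (A : ℤ → ℤ → Matrix (Fin s0) (Fin s0) ℝ)
    (hAsupp : ∀ i j : ℤ, ¬(i ∈ Hs ∧ j ∈ Hs) → A i j = 0)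
    (hAnn : ∀ i j : ℤ, ∀ k l, 0 ≤ A i j k l)
    (hAst : IsStochastic (∑ i ∈ Hs, ∑ j ∈ Hs, A i j))
    (hfull_i : ChainIrreducible (fullKernel s0 A))
    (hfull_a : ChainAperiodic (fullKernel s0 A)) :
    Bornology.IsBounded (GammaBar s0 A) := by
  classical
  have hs0' : 0 < s0 := hs0
  set k0 : Fin s0 := ⟨0, hs0'⟩ with hk0
  -- main estimate: for any point of `GammaBar` and any cycle through `k0`
  have main : ∀ (d1 d2 : ℤ) (m : ℕ), 1 ≤ m → ∀ p : ℝ × ℝ, p ∈ GammaBar s0 A →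
      Real.exp p.1 ^ d1 * Real.exp p.2 ^ d2 *
        stepN (fullKernel s0 A) m ((0:ℤ), (0:ℤ), k0) (d1, d2, k0) ≤ s0 := by
    intro d1 d2 m hm p hp
    set z := Real.exp p.1 with hzdef
    set w := Real.exp p.2 with hwdef
    have hz : 0 < z := Real.exp_pos _
    have hw : 0 < w := Real.exp_pos _
    set C := CmatR s0 A z w with hC
    have h1 := key_ineq hAsupp hAnn hz hw m ((0:ℤ),(0:ℤ),k0) (d1,d2,k0)
    simp only [sub_zero] at h1
    have h2 : (C ^ m) k0 k0 ≤ (C ^ m).trace := by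
      rw [Matrix.trace]
      exact Finset.single_le_sum
        (f := fun i => (C ^ m).diag i)
        (fun i _ => CmatR_pow_nonneg hAnn hz hw m i i) (Finset.mem_univ k0)
    have h3 : (C ^ m).trace ≤ |(C ^ m).trace| := le_abs_self _
    have h4 : |(C ^ m).trace| ≤ s0 * sprR C ^ m := trace_abs_le_real hs0' hm C
    have hchi : sprR C ≤ 1 := hp
    have hchi0 : 0 ≤ sprR C := by
      rw [sprR]
      exact spr_nonneg hs0' _
    have h5 : sprR C ^ m ≤ 1 := pow_le_one₀ hchi0 hchi
    calc z ^ d1 * w ^ d2 * stepN (fullKernel s0 A) m ((0:ℤ),(0:ℤ),k0) (d1,d2,k0)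
        ≤ (C ^ m) k0 k0 := h1
      _ ≤ (C ^ m).trace := h2
      _ ≤ |(C ^ m).trace| := h3
      _ ≤ s0 * sprR C ^ m := h4
      _ ≤ s0 * 1 := by
          exact mul_le_mul_of_nonneg_left h5 (by positivity)
      _ = s0 := mul_one _
  obtain ⟨m1, hm1, hq1⟩ := hfull_i ((0:ℤ),(0:ℤ),k0) ((1:ℤ),(0:ℤ),k0)
  obtain ⟨m2, hm2, hq2⟩ := hfull_i ((0:ℤ),(0:ℤ),k0) ((-1:ℤ),(0:ℤ),k0)
  obtain ⟨m3, hm3, hq3⟩ := hfull_i ((0:ℤ),(0:ℤ),k0) ((0:ℤ),(1:ℤ),k0)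
  obtain ⟨m4, hm4, hq4⟩ := hfull_i ((0:ℤ),(0:ℤ),k0) ((0:ℤ),(-1:ℤ),k0)
  set q1 := stepN (fullKernel s0 A) m1 ((0:ℤ),(0:ℤ),k0) ((1:ℤ),(0:ℤ),k0) with hq1d
  set q2 := stepN (fullKernel s0 A) m2 ((0:ℤ),(0:ℤ),k0) ((-1:ℤ),(0:ℤ),k0) with hq2d
  set q3 := stepN (fullKernel s0 A) m3 ((0:ℤ),(0:ℤ),k0) ((0:ℤ),(1:ℤ),k0) with hq3d
  set q4 := stepN (fullKernel s0 A) m4 ((0:ℤ),(0:ℤ),k0) ((0:ℤ),(-1:ℤ),k0) with hq4d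
  set R : ℝ := max (max (Real.log (s0 / q1)) (Real.log (s0 / q2)))
      (max (Real.log (s0 / q3)) (Real.log (s0 / q4))) with hR
  have hsub : GammaBar s0 A ⊆ Set.Icc (-R) R ×ˢ Set.Icc (-R) R := by
    intro p hp
    have hs0pos : (0:ℝ) < s0 := by exact_mod_cast hs0'
    have bound : ∀ (d1 d2 : ℤ) (m : ℕ), 1 ≤ m →
        ∀ q, q = stepN (fullKernel s0 A) m ((0:ℤ),(0:ℤ),k0) (d1,d2,k0) → 0 < q →
        Real.exp p.1 ^ d1 * Real.exp p.2 ^ d2 ≤ s0 / q := by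
      intro d1 d2 m hm q hqd hq
      have h := main d1 d2 m hm p hp
      rw [← hqd] at h
      rw [le_div_iff₀ hq]
      exact h
    have e1 : p.1 ≤ Real.log (s0 / q1) := by
      have h := bound 1 0 m1 hm1 q1 hq1d hq1
      rw [zpow_one, zpow_zero, mul_one] at h
      rw [Real.le_log_iff_exp_le (by positivity)]
      exact h
    have e2 : -p.1 ≤ Real.log (s0 / q2) := by
      have h := bound (-1) 0 m2 hm2 q2 hq2d hq2
      rw [zpow_zero, mul_one, zpow_neg, zpow_one, ← Real.exp_neg] at h
      rw [Real.le_log_iff_exp_le (by positivity)]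
      exact h
    have e3 : p.2 ≤ Real.log (s0 / q3) := by
      have h := bound 0 1 m3 hm3 q3 hq3d hq3
      rw [zpow_one, zpow_zero, one_mul] at h
      rw [Real.le_log_iff_exp_le (by positivity)]
      exact h
    have e4 : -p.2 ≤ Real.log (s0 / q4) := by
      have h := bound 0 (-1) m4 hm4 q4 hq4d hq4
      rw [zpow_zero, one_mul, zpow_neg, zpow_one, ← Real.exp_neg] at h
      rw [Real.le_log_iff_exp_le (by positivity)]
      exact h
    constructor
    · constructor
      · have : Real.log (s0 / q2) ≤ R := le_trans (le_max_right _ _) (le_max_left _ _)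
        linarith
      · exact le_trans e1 (le_trans (le_max_left _ _) (le_max_left _ _))
    · constructor
      · have : Real.log (s0 / q4) ≤ R := le_trans (le_max_right _ _) (le_max_right _ _)
        linarith
      · exact le_trans e3 (le_trans (le_max_left _ _) (le_max_right _ _))
  exact ((Metric.isBounded_Icc (-R) R).prod (Metric.isBounded_Icc (-R) R)).subset hsub
end

section
/- Suppose z ∈ ℂ∖{0} is such that the nonnegative matrix series N1(|z|), G1(|z|) and R1(|z|) converge entrywise. Then G1(z) = N1(z) · A_{*,−1}(z) and R1(z) = A_{*,1}(z) · N1(z). -/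
namespace QBDSeries

/-- The index set `H = {-1, 0, 1}`. -/
def Hs : Finset ℤ := {-1, 0, 1}

/-- Partial sum of the first `k` entries of a sequence `σ : Fin n → ℤ`. -/
def psum {n : ℕ} (σ : Fin n → ℤ) (k : ℕ) : ℤ :=
  ∑ i ∈ Finset.univ.filter (fun i : Fin n => (i : ℕ) < k), σ i

/-- Condition defining the index set `𝓘_n`. -/
def condQ (n : ℕ) (σ : Fin n → ℤ) : Prop :=
  (∀ k : ℕ, 1 ≤ k → k ≤ n - 1 → 0 ≤ psum σ k) ∧ psum σ n = 0

/-- Condition defining the index set `𝓘_{D,n}`. -/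
def condD (n : ℕ) (σ : Fin n → ℤ) : Prop :=
  (∀ k : ℕ, 1 ≤ k → k ≤ n - 1 → 0 ≤ psum σ k) ∧ psum σ n = -1

/-- Condition defining the index set `𝓘_{U,n}`. -/
def condU (n : ℕ) (σ : Fin n → ℤ) : Prop :=
  (∀ k : ℕ, 1 ≤ k → k ≤ n - 1 → 1 ≤ psum σ k) ∧ psum σ n = 1

/-- `A_{*,i}(z) = Σ_{j∈H} A_{j,i} z^j` over `ℂ`. -/
noncomputable def AstarC (s0 : ℕ) (A : ℤ → ℤ → Matrix (Fin s0) (Fin s0) ℝ) (z : ℂ) (i : ℤ) :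
    Matrix (Fin s0) (Fin s0) ℂ :=
  ∑ j ∈ Hs, (z ^ j) • (A j i).map Complex.ofReal

/-- `A_{*,i}(z) = Σ_{j∈H} A_{j,i} z^j` over `ℝ`. -/
noncomputable def AstarR (s0 : ℕ) (A : ℤ → ℤ → Matrix (Fin s0) (Fin s0) ℝ) (z : ℝ) (i : ℤ) :
    Matrix (Fin s0) (Fin s0) ℝ :=
  ∑ j ∈ Hs, (z ^ j) • A j i

open Classical in
/-- `Σ_{σ ∈ cond} A_{*,σ1}(z)⋯A_{*,σn}(z)` over `ℂ`. -/
noncomputable def pathSumC (s0 : ℕ) (A : ℤ → ℤ → Matrix (Fin s0) (Fin s0) ℝ) (z : ℂ) (n : ℕ)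
    (cond : (Fin n → ℤ) → Prop) : Matrix (Fin s0) (Fin s0) ℂ :=
  ∑ σ : Fin n → {x : ℤ // x ∈ Hs},
    if cond (fun k => (σ k : ℤ)) then (List.ofFn fun k : Fin n => AstarC s0 A z (σ k : ℤ)).prod
    else 0

open Classical in
/-- `Σ_{σ ∈ cond} A_{*,σ1}(z)⋯A_{*,σn}(z)` over `ℝ`. -/
noncomputable def pathSumR (s0 : ℕ) (A : ℤ → ℤ → Matrix (Fin s0) (Fin s0) ℝ) (z : ℝ) (n : ℕ)
    (cond : (Fin n → ℤ) → Prop) : Matrix (Fin s0) (Fin s0) ℝ :=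
  ∑ σ : Fin n → {x : ℤ // x ∈ Hs},
    if cond (fun k => (σ k : ℤ)) then (List.ofFn fun k : Fin n => AstarR s0 A z (σ k : ℤ)).prod
    else 0

/-- `Q^{(n)}(z)` (complex); `Q^{(0)}(z) = I`. -/
noncomputable def QmatC (s0 : ℕ) (A : ℤ → ℤ → Matrix (Fin s0) (Fin s0) ℝ) (z : ℂ) (n : ℕ) :
    Matrix (Fin s0) (Fin s0) ℂ := pathSumC s0 A z n (condQ n)

/-- `D^{(n)}(z)` (complex); it vanishes for `n = 0`. -/
noncomputable def DmatC (s0 : ℕ) (A : ℤ → ℤ → Matrix (Fin s0) (Fin s0) ℝ) (z : ℂ) (n : ℕ) :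
    Matrix (Fin s0) (Fin s0) ℂ := pathSumC s0 A z n (condD n)

/-- `U^{(n)}(z)` (complex); it vanishes for `n = 0`. -/
noncomputable def UmatC (s0 : ℕ) (A : ℤ → ℤ → Matrix (Fin s0) (Fin s0) ℝ) (z : ℂ) (n : ℕ) :
    Matrix (Fin s0) (Fin s0) ℂ := pathSumC s0 A z n (condU n)

/-- `Q^{(n)}(z)` (real). -/
noncomputable def QmatR (s0 : ℕ) (A : ℤ → ℤ → Matrix (Fin s0) (Fin s0) ℝ) (z : ℝ) (n : ℕ) :
    Matrix (Fin s0) (Fin s0) ℝ := pathSumR s0 A z n (condQ n)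

/-- `D^{(n)}(z)` (real). -/
noncomputable def DmatR (s0 : ℕ) (A : ℤ → ℤ → Matrix (Fin s0) (Fin s0) ℝ) (z : ℝ) (n : ℕ) :
    Matrix (Fin s0) (Fin s0) ℝ := pathSumR s0 A z n (condD n)

/-- `U^{(n)}(z)` (real). -/
noncomputable def UmatR (s0 : ℕ) (A : ℤ → ℤ → Matrix (Fin s0) (Fin s0) ℝ) (z : ℝ) (n : ℕ) :
    Matrix (Fin s0) (Fin s0) ℝ := pathSumR s0 A z n (condU n)

/-- `N1(z) = Σ_{n≥0} Q^{(n)}(z)`, entrywise (complex). -/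
noncomputable def N1C (s0 : ℕ) (A : ℤ → ℤ → Matrix (Fin s0) (Fin s0) ℝ) (z : ℂ) :
    Matrix (Fin s0) (Fin s0) ℂ := Matrix.of fun i j => ∑' n : ℕ, QmatC s0 A z n i j

/-- `G1(z) = Σ_{n≥1} D^{(n)}(z)`, entrywise (complex). -/
noncomputable def G1C (s0 : ℕ) (A : ℤ → ℤ → Matrix (Fin s0) (Fin s0) ℝ) (z : ℂ) :
    Matrix (Fin s0) (Fin s0) ℂ := Matrix.of fun i j => ∑' n : ℕ, DmatC s0 A z n i j

/-- `R1(z) = Σ_{n≥1} U^{(n)}(z)`, entrywise (complex). -/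
noncomputable def R1C (s0 : ℕ) (A : ℤ → ℤ → Matrix (Fin s0) (Fin s0) ℝ) (z : ℂ) :
    Matrix (Fin s0) (Fin s0) ℂ := Matrix.of fun i j => ∑' n : ℕ, UmatC s0 A z n i j

/-- `N1(z)` (real). -/
noncomputable def N1R (s0 : ℕ) (A : ℤ → ℤ → Matrix (Fin s0) (Fin s0) ℝ) (z : ℝ) :
    Matrix (Fin s0) (Fin s0) ℝ := Matrix.of fun i j => ∑' n : ℕ, QmatR s0 A z n i j

/-- `G1(z)` (real). -/
noncomputable def G1R (s0 : ℕ) (A : ℤ → ℤ → Matrix (Fin s0) (Fin s0) ℝ) (z : ℝ) :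
    Matrix (Fin s0) (Fin s0) ℝ := Matrix.of fun i j => ∑' n : ℕ, DmatR s0 A z n i j

/-- `R1(z)` (real). -/
noncomputable def R1R (s0 : ℕ) (A : ℤ → ℤ → Matrix (Fin s0) (Fin s0) ℝ) (z : ℝ) :
    Matrix (Fin s0) (Fin s0) ℝ := Matrix.of fun i j => ∑' n : ℕ, UmatR s0 A z n i j

/-- `C(z,w) = Σ_{i,j∈H} A_{i,j} z^i w^j` over `ℂ`. -/
noncomputable def CmatC (s0 : ℕ) (A : ℤ → ℤ → Matrix (Fin s0) (Fin s0) ℝ) (z w : ℂ) :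
    Matrix (Fin s0) (Fin s0) ℂ :=
  ∑ i ∈ Hs, ∑ j ∈ Hs, (z ^ i * w ^ j) • (A i j).map Complex.ofReal

/-- `H1(z) = A_{*,0}(z) + A_{*,1}(z) N1(z) A_{*,-1}(z)` (complex). -/
noncomputable def H1C (s0 : ℕ) (A : ℤ → ℤ → Matrix (Fin s0) (Fin s0) ℝ) (z : ℂ) :
    Matrix (Fin s0) (Fin s0) ℂ :=
  AstarC s0 A z 0 + AstarC s0 A z 1 * N1C s0 A z * AstarC s0 A z (-1)

/-- A matrix with row sums one and nonnegative entries. -/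
def IsStochastic {n : ℕ} (M : Matrix (Fin n) (Fin n) ℝ) : Prop :=
  (∀ i j, 0 ≤ M i j) ∧ ∀ i, ∑ j, M i j = 1

end QBDSeries


namespace QBDSeries

lemma psum_eq {n : ℕ} (σ : Fin n → ℤ) (k : ℕ) :
    psum σ k = ∑ i : Fin n, if (i : ℕ) < k then σ i else 0 := by
  rw [psum, Finset.sum_filter]

lemma psum_zero' {n : ℕ} (σ : Fin n → ℤ) : psum σ 0 = 0 := by
  simp [psum_eq]

lemma psum_all {n : ℕ} (σ : Fin n → ℤ) {k : ℕ} (h : n ≤ k) : psum σ k = psum σ n := by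
  simp only [psum_eq]
  refine Finset.sum_congr rfl fun i _ => ?_
  have h1 : (i : ℕ) < k := lt_of_lt_of_le i.isLt h
  simp [h1, i.isLt]

lemma psum_snoc {n : ℕ} (σ : Fin n → ℤ) (a : ℤ) (k : ℕ) :
    psum (Fin.snoc σ a) k = psum σ k + if n < k then a else 0 := by
  simp only [psum_eq]
  rw [Fin.sum_univ_castSucc]
  simp [Fin.snoc_castSucc, Fin.snoc_last]

lemma psum_cons {n : ℕ} (a : ℤ) (σ : Fin n → ℤ) (k : ℕ) :
    psum (Fin.cons a σ) k = (if 0 < k then a else 0) + psum σ (k - 1) := by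
  simp only [psum_eq]
  rw [Fin.sum_univ_succ]
  simp only [Fin.cons_zero, Fin.cons_succ, Fin.val_zero, Fin.val_succ]
  congr 1
  refine Finset.sum_congr rfl fun i _ => ?_
  have : ((i : ℕ) + 1 < k) ↔ ((i : ℕ) < k - 1) := by omega
  simp [this]

lemma condD_snoc {n : ℕ} (σ : Fin n → ℤ) (a : ℤ) (ha : a = -1 ∨ a = 0 ∨ a = 1) :
    condD (n + 1) (Fin.snoc σ a) ↔ (condQ n σ ∧ a = -1) := by
  unfold condD condQ
  have hp : ∀ k, k ≤ n → psum (Fin.snoc σ a) k = psum σ k := fun k hk => by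
    rw [psum_snoc]; simp [Nat.not_lt.mpr hk]
  have hpn : psum (Fin.snoc σ a) (n + 1) = psum σ n + a := by
    rw [psum_snoc, if_pos (Nat.lt_succ_self n), psum_all σ (Nat.le_succ n)]
  constructor
  · rintro ⟨h1, h2⟩
    rw [hpn] at h2
    have hn : 0 ≤ psum σ n := by
      rcases Nat.eq_zero_or_pos n with h | h
      · subst h; rw [psum_zero']
      · have := h1 n h (by omega)
        rwa [hp n le_rfl] at this
    have ha' : a = -1 ∧ psum σ n = 0 := by omega
    refine ⟨⟨fun k hk1 hk2 => ?_, ha'.2⟩, ha'.1⟩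
    have := h1 k hk1 (by omega)
    rwa [hp k (by omega)] at this
  · rintro ⟨⟨h1, h2⟩, rfl⟩
    refine ⟨fun k hk1 hk2 => ?_, by rw [hpn, h2]; ring⟩
    rw [hp k (by omega)]
    rcases Nat.lt_or_ge k n with h | h
    · exact h1 k hk1 (by omega)
    · have hkn : k = n := by omega
      subst hkn; omega

lemma condU_cons {n : ℕ} (a : ℤ) (σ : Fin n → ℤ) (ha : a = -1 ∨ a = 0 ∨ a = 1) :
    condU (n + 1) (Fin.cons a σ) ↔ (condQ n σ ∧ a = 1) := by
  unfold condU condQ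
  have hp : ∀ k, 1 ≤ k → psum (Fin.cons a σ) k = a + psum σ (k - 1) := fun k hk => by
    rw [psum_cons, if_pos (by omega : 0 < k)]
  constructor
  · rintro ⟨h1, h2⟩
    rw [hp (n + 1) (by omega)] at h2
    simp only [Nat.add_sub_cancel] at h2
    have ha1 : a = 1 := by
      rcases Nat.eq_zero_or_pos n with h | h
      · subst h; rw [psum_zero'] at h2; omega
      · have := h1 1 le_rfl (by omega)
        rw [hp 1 le_rfl] at this
        simp only [Nat.sub_self, psum_zero'] at this
        omega
    subst ha1
    refine ⟨⟨fun k hk1 hk2 => ?_, by omega⟩, rfl⟩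
    have := h1 (k + 1) (by omega) (by omega)
    rw [hp (k + 1) (by omega)] at this
    simp only [Nat.add_sub_cancel] at this
    omega
  · rintro ⟨⟨h1, h2⟩, rfl⟩
    refine ⟨fun k hk1 hk2 => ?_, by rw [hp (n + 1) (by omega)]; simp [h2]⟩
    rw [hp k hk1]
    rcases Nat.lt_or_ge (k - 1) 1 with h | h
    · have hk1' : k = 1 := by omega
      subst hk1'; rw [psum_zero']; omega
    · have := h1 (k - 1) (by omega) (by omega)
      omega

lemma mem_Hs_iff {x : ℤ} : x ∈ Hs ↔ x = -1 ∨ x = 0 ∨ x = 1 := by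
  simp [Hs]

lemma listprod_snoc {M : Type*} [Monoid M] {n : ℕ} (f : Fin n → M) (a : M) :
    (List.ofFn (Fin.snoc f a : Fin (n + 1) → M)).prod = (List.ofFn f).prod * a := by
  rw [List.ofFn_succ', List.prod_concat]
  simp

lemma listprod_cons {M : Type*} [Monoid M] {n : ℕ} (a : M) (f : Fin n → M) :
    (List.ofFn (Fin.cons a f : Fin (n + 1) → M)).prod = a * (List.ofFn f).prod := by
  rw [List.ofFn_succ, List.prod_cons]
  simp [Fin.cons_succ]

lemma DmatC_zero (s0 : ℕ) (A : ℤ → ℤ → Matrix (Fin s0) (Fin s0) ℝ) (z : ℂ) :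
    DmatC s0 A z 0 = 0 := by
  unfold DmatC pathSumC
  refine Finset.sum_eq_zero fun σ _ => ?_
  rw [if_neg]
  rintro ⟨-, h2⟩
  rw [psum_zero'] at h2
  omega

lemma UmatC_zero (s0 : ℕ) (A : ℤ → ℤ → Matrix (Fin s0) (Fin s0) ℝ) (z : ℂ) :
    UmatC s0 A z 0 = 0 := by
  unfold UmatC pathSumC
  refine Finset.sum_eq_zero fun σ _ => ?_
  rw [if_neg]
  rintro ⟨-, h2⟩
  rw [psum_zero'] at h2
  omega

lemma DmatC_succ (s0 : ℕ) (A : ℤ → ℤ → Matrix (Fin s0) (Fin s0) ℝ) (z : ℂ) (n : ℕ) :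
    DmatC s0 A z (n + 1) = QmatC s0 A z n * AstarC s0 A z (-1) := by
  classical
  unfold DmatC QmatC pathSumC
  rw [← (Fin.snocEquiv (fun _ : Fin (n + 1) => {x : ℤ // x ∈ Hs})).sum_comp]
  rw [Fintype.sum_prod_type_right]
  rw [Finset.sum_mul]
  refine Finset.sum_congr rfl fun σ _ => ?_
  have key : ∀ a : {x : ℤ // x ∈ Hs},
      (fun k => ((Fin.snocEquiv (fun _ : Fin (n + 1) => {x : ℤ // x ∈ Hs}) (a, σ)) k : ℤ))
        = Fin.snoc (fun i => (σ i : ℤ)) (a : ℤ) := by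
    intro a
    funext k
    show ((Fin.snoc σ a : Fin (n + 1) → _) k : ℤ) = _
    exact congrFun (Fin.comp_snoc Subtype.val σ a) k
  have key2 : ∀ a : {x : ℤ // x ∈ Hs},
      (List.ofFn fun k : Fin (n + 1) =>
          AstarC s0 A z ((Fin.snocEquiv (fun _ : Fin (n + 1) => {x : ℤ // x ∈ Hs}) (a, σ)) k : ℤ)).prod
        = (List.ofFn fun k : Fin n => AstarC s0 A z (σ k : ℤ)).prod * AstarC s0 A z (a : ℤ) := by
    intro a
    have : (fun k : Fin (n + 1) =>
        AstarC s0 A z ((Fin.snocEquiv (fun _ : Fin (n + 1) => {x : ℤ // x ∈ Hs}) (a, σ)) k : ℤ))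
        = Fin.snoc (fun k : Fin n => AstarC s0 A z (σ k : ℤ)) (AstarC s0 A z (a : ℤ)) := by
      rw [show (fun k : Fin (n+1) => AstarC s0 A z
          ((Fin.snocEquiv (fun _ : Fin (n + 1) => {x : ℤ // x ∈ Hs}) (a, σ)) k : ℤ))
          = (AstarC s0 A z) ∘ (fun k => ((Fin.snocEquiv (fun _ : Fin (n + 1) => {x : ℤ // x ∈ Hs}) (a, σ)) k : ℤ)) from rfl,
        key a, Fin.comp_snoc]
      rfl
    rw [this, listprod_snoc]
  calc (∑ a : {x : ℤ // x ∈ Hs},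
        if condD (n + 1) (fun k => ((Fin.snocEquiv (fun _ : Fin (n + 1) => {x : ℤ // x ∈ Hs}) (a, σ)) k : ℤ))
        then (List.ofFn fun k : Fin (n + 1) =>
            AstarC s0 A z ((Fin.snocEquiv (fun _ : Fin (n + 1) => {x : ℤ // x ∈ Hs}) (a, σ)) k : ℤ)).prod
        else 0)
      = ∑ a : {x : ℤ // x ∈ Hs},
        if condQ n (fun k => (σ k : ℤ)) ∧ a = (⟨-1, by decide⟩ : {x : ℤ // x ∈ Hs})
        then (List.ofFn fun k : Fin n => AstarC s0 A z (σ k : ℤ)).prod * AstarC s0 A z (a : ℤ)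
        else 0 := by
        refine Finset.sum_congr rfl fun a _ => ?_
        rw [key2 a]
        congr 1
        rw [key a, condD_snoc _ _ (mem_Hs_iff.mp a.2)]
        simp [Subtype.ext_iff]
    _ = (if condQ n (fun k => (σ k : ℤ))
        then (List.ofFn fun k : Fin n => AstarC s0 A z (σ k : ℤ)).prod else 0) * AstarC s0 A z (-1) := by
        by_cases hq : condQ n (fun k => (σ k : ℤ))
        · simp only [hq, true_and, if_true]
          rw [Finset.sum_ite_eq' Finset.univ (⟨-1, by decide⟩ : {x : ℤ // x ∈ Hs})
            (fun a => (List.ofFn fun k : Fin n => AstarC s0 A z (σ k : ℤ)).prod * AstarC s0 A z (a : ℤ))]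
          simp
        · simp [hq]

lemma UmatC_succ (s0 : ℕ) (A : ℤ → ℤ → Matrix (Fin s0) (Fin s0) ℝ) (z : ℂ) (n : ℕ) :
    UmatC s0 A z (n + 1) = AstarC s0 A z 1 * QmatC s0 A z n := by
  classical
  unfold UmatC QmatC pathSumC
  rw [← (Fin.consEquiv (fun _ : Fin (n + 1) => {x : ℤ // x ∈ Hs})).sum_comp]
  rw [Fintype.sum_prod_type_right]
  rw [Finset.mul_sum]
  refine Finset.sum_congr rfl fun σ _ => ?_
  have key : ∀ a : {x : ℤ // x ∈ Hs},
      (fun k => ((Fin.consEquiv (fun _ : Fin (n + 1) => {x : ℤ // x ∈ Hs}) (a, σ)) k : ℤ))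
        = Fin.cons (a : ℤ) (fun i => (σ i : ℤ)) := by
    intro a
    funext k
    show ((Fin.cons a σ : Fin (n + 1) → _) k : ℤ) = _
    exact congrFun (Fin.comp_cons Subtype.val a σ) k
  have key2 : ∀ a : {x : ℤ // x ∈ Hs},
      (List.ofFn fun k : Fin (n + 1) =>
          AstarC s0 A z ((Fin.consEquiv (fun _ : Fin (n + 1) => {x : ℤ // x ∈ Hs}) (a, σ)) k : ℤ)).prod
        = AstarC s0 A z (a : ℤ) * (List.ofFn fun k : Fin n => AstarC s0 A z (σ k : ℤ)).prod := by
    intro a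
    have : (fun k : Fin (n + 1) =>
        AstarC s0 A z ((Fin.consEquiv (fun _ : Fin (n + 1) => {x : ℤ // x ∈ Hs}) (a, σ)) k : ℤ))
        = Fin.cons (AstarC s0 A z (a : ℤ)) (fun k : Fin n => AstarC s0 A z (σ k : ℤ)) := by
      rw [show (fun k : Fin (n+1) => AstarC s0 A z
          ((Fin.consEquiv (fun _ : Fin (n + 1) => {x : ℤ // x ∈ Hs}) (a, σ)) k : ℤ))
          = (AstarC s0 A z) ∘ (fun k => ((Fin.consEquiv (fun _ : Fin (n + 1) => {x : ℤ // x ∈ Hs}) (a, σ)) k : ℤ)) from rfl,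
        key a, Fin.comp_cons]
      rfl
    rw [this, listprod_cons]
  calc (∑ a : {x : ℤ // x ∈ Hs},
        if condU (n + 1) (fun k => ((Fin.consEquiv (fun _ : Fin (n + 1) => {x : ℤ // x ∈ Hs}) (a, σ)) k : ℤ))
        then (List.ofFn fun k : Fin (n + 1) =>
            AstarC s0 A z ((Fin.consEquiv (fun _ : Fin (n + 1) => {x : ℤ // x ∈ Hs}) (a, σ)) k : ℤ)).prod
        else 0)
      = ∑ a : {x : ℤ // x ∈ Hs},
        if condQ n (fun k => (σ k : ℤ)) ∧ a = (⟨1, by decide⟩ : {x : ℤ // x ∈ Hs})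
        then AstarC s0 A z (a : ℤ) * (List.ofFn fun k : Fin n => AstarC s0 A z (σ k : ℤ)).prod
        else 0 := by
        refine Finset.sum_congr rfl fun a _ => ?_
        rw [key2 a]
        congr 1
        rw [key a, condU_cons _ _ (mem_Hs_iff.mp a.2)]
        simp [Subtype.ext_iff]
    _ = AstarC s0 A z 1 * (if condQ n (fun k => (σ k : ℤ))
        then (List.ofFn fun k : Fin n => AstarC s0 A z (σ k : ℤ)).prod else 0) := by
        by_cases hq : condQ n (fun k => (σ k : ℤ))
        · simp only [hq, true_and, if_true]
          rw [Finset.sum_ite_eq' Finset.univ (⟨1, by decide⟩ : {x : ℤ // x ∈ Hs})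
            (fun a => AstarC s0 A z (a : ℤ) * (List.ofFn fun k : Fin n => AstarC s0 A z (σ k : ℤ)).prod)]
          simp
        · simp [hq]

lemma abs_AstarC_le {s0 : ℕ} {A : ℤ → ℤ → Matrix (Fin s0) (Fin s0) ℝ}
    (hAnn : ∀ i j : ℤ, ∀ k l, 0 ≤ A i j k l) (z : ℂ) (i : ℤ) (k l : Fin s0) :
    ‖AstarC s0 A z i k l‖ ≤ AstarR s0 A ‖z‖ i k l := by
  unfold AstarC AstarR
  rw [Matrix.sum_apply, Matrix.sum_apply]
  refine le_trans (norm_sum_le _ _) (Finset.sum_le_sum fun j _ => ?_)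
  rw [Matrix.smul_apply, Matrix.smul_apply, smul_eq_mul, smul_eq_mul, norm_mul,
    norm_zpow, Matrix.map_apply, Complex.norm_real, Real.norm_eq_abs, abs_of_nonneg (hAnn j i k l)]

lemma abs_ofFn_prod_le {s0 : ℕ} : ∀ (n : ℕ) (f : Fin n → Matrix (Fin s0) (Fin s0) ℂ)
    (g : Fin n → Matrix (Fin s0) (Fin s0) ℝ),
    (∀ k i j, ‖f k i j‖ ≤ g k i j) →
    ∀ i j, ‖(List.ofFn f).prod i j‖ ≤ (List.ofFn g).prod i j := by
  intro n
  induction n with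
  | zero =>
    intro f g h i j
    simp only [List.ofFn_zero, List.prod_nil, Matrix.one_apply]
    split <;> simp
  | succ m ih =>
    intro f g h i j
    rw [List.ofFn_succ, List.ofFn_succ, List.prod_cons, List.prod_cons,
      Matrix.mul_apply, Matrix.mul_apply]
    refine le_trans (norm_sum_le _ _) (Finset.sum_le_sum fun k _ => ?_)
    rw [norm_mul]
    exact mul_le_mul (h 0 i k) (ih _ _ (fun a => h a.succ) k j) (norm_nonneg _)
      ((norm_nonneg _).trans (h 0 i k))

open Classical in
lemma abs_pathSumC_le {s0 : ℕ} {A : ℤ → ℤ → Matrix (Fin s0) (Fin s0) ℝ}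
    (hAnn : ∀ i j : ℤ, ∀ k l, 0 ≤ A i j k l) (z : ℂ) (n : ℕ)
    (cond : (Fin n → ℤ) → Prop) (i j : Fin s0) :
    ‖pathSumC s0 A z n cond i j‖ ≤ pathSumR s0 A ‖z‖ n cond i j := by
  unfold pathSumC pathSumR
  rw [Matrix.sum_apply, Matrix.sum_apply]
  refine le_trans (norm_sum_le _ _) (Finset.sum_le_sum fun σ _ => ?_)
  by_cases hc : cond (fun k => (σ k : ℤ))
  · simp only [hc, if_true, Matrix.of_apply]
    exact abs_ofFn_prod_le n _ _ (fun k a b => abs_AstarC_le hAnn z _ a b) i j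
  · simp [hc]


end QBDSeries

open QBDSeries in
/-- `G1(z) = N1(z) A_{*,-1}(z)` and `R1(z) = A_{*,1}(z) N1(z)`. -/
theorem statement7
    (s0 : ℕ) (hs0 : 1 ≤ s0)
    (A : ℤ → ℤ → Matrix (Fin s0) (Fin s0) ℝ)
    (hAsupp : ∀ i j : ℤ, ¬(i ∈ Hs ∧ j ∈ Hs) → A i j = 0)
    (hAnn : ∀ i j : ℤ, ∀ k l, 0 ≤ A i j k l)
    (hAst : IsStochastic (∑ i ∈ Hs, ∑ j ∈ Hs, A i j))
    (z : ℂ) (hz : z ≠ 0)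
    (hN : ∀ i j, Summable fun n : ℕ => QmatR s0 A ‖z‖ n i j)
    (hG : ∀ i j, Summable fun n : ℕ => DmatR s0 A ‖z‖ n i j)
    (hR : ∀ i j, Summable fun n : ℕ => UmatR s0 A ‖z‖ n i j) :
    G1C s0 A z = N1C s0 A z * AstarC s0 A z (-1) ∧
    R1C s0 A z = AstarC s0 A z 1 * N1C s0 A z := by
  classical
  have hQC : ∀ i j, Summable fun n : ℕ => QmatC s0 A z n i j := fun i j =>
    Summable.of_norm_bounded (hN i j) fun n => by
      exact abs_pathSumC_le hAnn z n _ i j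
  have hDC : ∀ i j, Summable fun n : ℕ => DmatC s0 A z n i j := fun i j =>
    Summable.of_norm_bounded (hG i j) fun n => by
      exact abs_pathSumC_le hAnn z n _ i j
  have hUC : ∀ i j, Summable fun n : ℕ => UmatC s0 A z n i j := fun i j =>
    Summable.of_norm_bounded (hR i j) fun n => by
      exact abs_pathSumC_le hAnn z n _ i j
  constructor
  · ext i j
    have lhs : G1C s0 A z i j = ∑' n : ℕ, DmatC s0 A z n i j := rfl
    rw [lhs, Matrix.mul_apply, Summable.tsum_eq_zero_add (hDC i j)]
    simp only [DmatC_zero, Matrix.zero_apply, zero_add]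
    have e1 : ∀ n : ℕ, DmatC s0 A z (n + 1) i j
        = ∑ k, QmatC s0 A z n i k * AstarC s0 A z (-1) k j := fun n => by
      rw [DmatC_succ, Matrix.mul_apply]
    rw [tsum_congr e1, Summable.tsum_finsetSum (fun k _ => (hQC i k).mul_right _)]
    refine Finset.sum_congr rfl fun k _ => ?_
    rw [tsum_mul_right]
    rfl
  · ext i j
    have lhs : R1C s0 A z i j = ∑' n : ℕ, UmatC s0 A z n i j := rfl
    rw [lhs, Matrix.mul_apply, Summable.tsum_eq_zero_add (hUC i j)]
    simp only [UmatC_zero, Matrix.zero_apply, zero_add]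
    have e1 : ∀ n : ℕ, UmatC s0 A z (n + 1) i j
        = ∑ k, AstarC s0 A z 1 i k * QmatC s0 A z n k j := fun n => by
      rw [UmatC_succ, Matrix.mul_apply]
    rw [tsum_congr e1, Summable.tsum_finsetSum (fun k _ => (hQC k j).mul_left _)]
    refine Finset.sum_congr rfl fun k _ => ?_
    rw [tsum_mul_left]
    rfl
end
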